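/- Let b ≥ 2, and suppose a finite word w over the alphabet {0,...,b−1} is (ε,k)-normal, i.e., (ε,u)-normal for every word u of length k with respect to m(u) = b^{−k}. Then for every 1 ≤ ℓ < k and every word u of length ℓ, w is (ε', ℓ)-normal where ε' = 2k/(|w| − k + 1) + b^k·ε. -/

import Mathlib

/-- `occCount u w`: the number of occurrences of `u` as a contiguous subword of `w`. -/
def occCount {α : Type*} [DecidableEq α] (u w : List α) : ℕ :=
  ((Finset.range (w.length + 1)).filter (fun i => (w.drop i).take u.length = u)).card

lemma exists_ofFn {α : Type*} (m : ℕ) (l : List α) (h : l.length = m) :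
    ∃ g : Fin m → α, List.ofFn g = l := by
  subst h; exact ⟨l.get, List.ofFn_get l⟩

/-- If a word `w` over the alphabet `{0,…,b−1}` is `(ε,k)`-normal (i.e. `(ε,u)`-normal for all
`u` of length `k`, with expected frequency `b^{−k}`), then for every `1 ≤ ℓ < k` and every `u`
of length `ℓ`, `w` is `(ε',ℓ)`-normal with `ε' = 2k/(|w| − k + 1) + b^k·ε`. -/
theorem eps_k_normal_implies_shorter (b : ℕ) (hb : 2 ≤ b) (ε : ℝ) (hε : 0 ≤ ε)
    (k : ℕ) (w : List (Fin b)) (hkw : k ≤ w.length)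
    (hnorm : ∀ u : List (Fin b), u.length = k →
      |((occCount u w : ℝ)) / ((w.length : ℝ) - (k : ℝ) + 1) - ((b : ℝ) ^ k)⁻¹| ≤ ε) :
    ∀ ℓ, 1 ≤ ℓ → ℓ < k → ∀ u : List (Fin b), u.length = ℓ →
      |((occCount u w : ℝ)) / ((w.length : ℝ) - (ℓ : ℝ) + 1) - ((b : ℝ) ^ ℓ)⁻¹| ≤
        2 * (k : ℝ) / ((w.length : ℝ) - (k : ℝ) + 1) + (b : ℝ) ^ k * ε := by
  intro ℓ hℓ1 hℓk u hu
  set n := w.length with hn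
  set m := k - ℓ with hmdef
  have hk : k = ℓ + m := by omega
  have hm1 : 1 ≤ m := by omega
  -- the finset of all words of length m
  set t : Finset (List (Fin b)) :=
    (Finset.univ : Finset (Fin m → Fin b)).image List.ofFn with ht
  have htcard : t.card = b ^ m := by
    rw [ht, Finset.card_image_of_injective _ List.ofFn_injective]
    simp
  have htlen : ∀ x ∈ t, x.length = m := by
    intro x hx
    rw [ht, Finset.mem_image] at hx
    obtain ⟨g, _, rfl⟩ := hx
    simp
  -- the set counted by occCount u w
  set F : Finset ℕ := (Finset.range (n + 1)).filter
    (fun i => (w.drop i).take ℓ = u) with hF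
  have hoccu : occCount u w = F.card := by
    rw [occCount, hu]
  set S : Finset ℕ := F.filter (fun i => i + k ≤ n) with hS
  set E : Finset ℕ := F.filter (fun i => ¬ (i + k ≤ n)) with hE
  have hsplit : S.card + E.card = F.card :=
    Finset.card_filter_add_card_filter_not _
  -- occurrences need room:
  have hroom : ∀ i ∈ F, i + ℓ ≤ n := by
    intro i hi
    rw [hF, Finset.mem_filter] at hi
    have := congrArg List.length hi.2
    simp [hu] at this
    omega
  -- E is small
  have hEcard : E.card ≤ m := by
    have hsub : E ⊆ Finset.Ico (n + 1 - k) (n + 1 - ℓ) := by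
      intro i hi
      rw [hE, Finset.mem_filter] at hi
      have h1 := hroom i hi.1
      have h2 := hi.2
      rw [Finset.mem_Ico]
      omega
    calc E.card ≤ _ := Finset.card_le_card hsub
      _ = (n + 1 - ℓ) - (n + 1 - k) := Nat.card_Ico _ _
      _ ≤ m := by omega
  -- F is not too big
  have hFcard : F.card ≤ n - ℓ + 1 := by
    have hsub : F ⊆ Finset.range (n - ℓ + 1) := by
      intro i hi
      have := hroom i hi
      rw [Finset.mem_range]; omega
    calc F.card ≤ _ := Finset.card_le_card hsub
      _ = n - ℓ + 1 := Finset.card_range _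
  -- fiberwise decomposition of S
  have hScard : S.card = ∑ x ∈ t, occCount (u ++ x) w := by
    rw [Finset.card_eq_sum_card_fiberwise
      (f := fun i => (w.drop (i + ℓ)).take m) (t := t)]
    · apply Finset.sum_congr rfl
      intro x hx
      have hxlen := htlen x hx
      congr 1
      have hlen : (u ++ x).length = k := by simp [hu, hxlen]; omega
      simp only [occCount, hlen]
      rw [hS, hF, Finset.filter_filter, Finset.filter_filter]
      apply Finset.filter_congr
      intro i _
      constructor
      · rintro ⟨h1, h2, h3⟩
        rw [hk, List.take_add, List.drop_drop, h1, h3]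
      · intro h
        have h1 : (w.drop i).take ℓ = u := by
          have := congrArg (List.take ℓ) h
          rwa [List.take_take, min_eq_left (by omega), List.take_left' hu] at this
        have h3 : (w.drop (i + ℓ)).take m = x := by
          have := congrArg (List.drop ℓ) h
          rwa [List.drop_take, List.drop_drop, List.drop_left' hu,
            show k - ℓ = m from rfl] at this
        have h2 : i + k ≤ n := by
          have := congrArg List.length h3
          simp [hxlen] at this
          omega
        exact ⟨h1, h2, h3⟩
    · intro i hi
      rw [Finset.mem_coe, Finset.mem_filter] at hi
      have hlen : ((w.drop (i + ℓ)).take m).length = m := by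
        simp; omega
      obtain ⟨g, hg⟩ := exists_ofFn m _ hlen
      rw [Finset.mem_coe, ht, Finset.mem_image]
      exact ⟨g, Finset.mem_univ g, hg⟩
  -- real numbers setup
  have hb1 : (1 : ℝ) ≤ b := by exact_mod_cast Nat.one_le_of_lt hb
  have hD2 : (1 : ℝ) ≤ (n : ℝ) - k + 1 := by
    have : (k : ℝ) ≤ n := by exact_mod_cast hkw
    linarith
  have hD2pos : (0 : ℝ) < (n : ℝ) - k + 1 := by linarith
  have hD1 : (n : ℝ) - k + 1 ≤ (n : ℝ) - ℓ + 1 := by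
    have : (ℓ : ℝ) ≤ k := by exact_mod_cast hℓk.le
    linarith
  have hD1pos : (0 : ℝ) < (n : ℝ) - ℓ + 1 := lt_of_lt_of_le hD2pos hD1
  set D1 : ℝ := (n : ℝ) - ℓ + 1
  set D2 : ℝ := (n : ℝ) - k + 1
  set A : ℝ := (occCount u w : ℝ)
  set Ss : ℝ := ∑ x ∈ t, (occCount (u ++ x) w : ℝ) with hSs
  have hA : A = Ss + (E.card : ℝ) := by
    have : occCount u w = (∑ x ∈ t, occCount (u ++ x) w) + E.card := by
      rw [hoccu, ← hsplit, hScard]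
    have h := congrArg (Nat.cast : ℕ → ℝ) this
    push_cast at h
    exact h
  have hAle : A ≤ D1 := by
    have : (occCount u w : ℝ) ≤ ((n - ℓ + 1 : ℕ) : ℝ) := by
      exact_mod_cast hoccu ▸ hFcard
    calc A ≤ ((n - ℓ + 1 : ℕ) : ℝ) := this
      _ ≤ D1 := by
        have h1 : ℓ ≤ n := by omega
        push_cast [Nat.cast_sub h1]
        simp [D1]
  have hAnn : 0 ≤ A := Nat.cast_nonneg _
  have hEle : (E.card : ℝ) ≤ (m : ℝ) := by exact_mod_cast hEcard
  have hEnn : (0 : ℝ) ≤ (E.card : ℝ) := Nat.cast_nonneg _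
  have hD12 : D1 - D2 = (m : ℝ) := by
    have : (k : ℝ) = ℓ + m := by exact_mod_cast hk
    simp only [D1, D2]; linarith
  -- Bound 1: sum close to b^{-ℓ}
  have hbk : ((b : ℝ) ^ ℓ)⁻¹ = ∑ _x ∈ t, ((b : ℝ) ^ k)⁻¹ := by
    rw [Finset.sum_const, htcard, nsmul_eq_mul, hk, pow_add]
    have hbℓ : (0 : ℝ) < (b : ℝ) ^ ℓ := by positivity
    have hbm : (0 : ℝ) < (b : ℝ) ^ m := by positivity
    push_cast
    field_simp
  have bound1 : |Ss / D2 - ((b : ℝ) ^ ℓ)⁻¹| ≤ (b : ℝ) ^ m * ε := by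
    have : Ss / D2 - ((b : ℝ) ^ ℓ)⁻¹ =
        ∑ x ∈ t, ((occCount (u ++ x) w : ℝ) / D2 - ((b : ℝ) ^ k)⁻¹) := by
      rw [Finset.sum_sub_distrib, ← hbk, hSs, Finset.sum_div]
    rw [this]
    calc |∑ x ∈ t, ((occCount (u ++ x) w : ℝ) / D2 - ((b : ℝ) ^ k)⁻¹)|
        ≤ ∑ x ∈ t, |(occCount (u ++ x) w : ℝ) / D2 - ((b : ℝ) ^ k)⁻¹| :=
          Finset.abs_sum_le_sum_abs _ _
      _ ≤ ∑ _x ∈ t, ε := by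
          apply Finset.sum_le_sum
          intro x hx
          have hlen : (u ++ x).length = k := by
            simp [hu, htlen x hx]; omega
          exact hnorm (u ++ x) hlen
      _ = (b : ℝ) ^ m * ε := by
          rw [Finset.sum_const, htcard, nsmul_eq_mul]; push_cast; ring
  -- Bound 2
  have bound2 : |A / D1 - Ss / D2| ≤ 2 * (m : ℝ) / D2 := by
    have hSseq : Ss = A - (E.card : ℝ) := by linarith
    have heq : A / D1 - Ss / D2 =
        (E.card : ℝ) / D2 - A * (D1 - D2) / (D1 * D2) := by
      rw [hSseq]
      field_simp
      ring
    rw [heq]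
    have h1 : |(E.card : ℝ) / D2 - A * (D1 - D2) / (D1 * D2)| ≤
        (E.card : ℝ) / D2 + A * (D1 - D2) / (D1 * D2) := by
      have t1 : (0 : ℝ) ≤ (E.card : ℝ) / D2 := div_nonneg hEnn hD2pos.le
      have t2 : (0 : ℝ) ≤ A * (D1 - D2) / (D1 * D2) := by
        apply div_nonneg
        · apply mul_nonneg hAnn; rw [hD12]; positivity
        · exact (mul_pos hD1pos hD2pos).le
      rw [abs_sub_comm]
      calc |A * (D1 - D2) / (D1 * D2) - (E.card : ℝ) / D2| ≤ _ :=
            abs_sub _ _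
        _ = A * (D1 - D2) / (D1 * D2) + (E.card : ℝ) / D2 := by
            rw [abs_of_nonneg t2, abs_of_nonneg t1]
        _ = (E.card : ℝ) / D2 + A * (D1 - D2) / (D1 * D2) := by ring
    refine h1.trans ?_
    have h2 : (E.card : ℝ) / D2 ≤ (m : ℝ) / D2 := by gcongr
    have h3 : A * (D1 - D2) / (D1 * D2) ≤ (m : ℝ) / D2 := by
      rw [hD12]
      rw [div_le_div_iff₀ (mul_pos hD1pos hD2pos) hD2pos]
      have : A * (m : ℝ) ≤ D1 * (m : ℝ) := by
        apply mul_le_mul_of_nonneg_right hAle (by positivity)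
      calc A * (m : ℝ) * D2 ≤ D1 * (m : ℝ) * D2 := by nlinarith
        _ = (m : ℝ) * (D1 * D2) := by ring
    calc (E.card : ℝ) / D2 + A * (D1 - D2) / (D1 * D2)
        ≤ (m : ℝ) / D2 + (m : ℝ) / D2 := add_le_add h2 h3
      _ = 2 * (m : ℝ) / D2 := by ring
  -- combine
  have hmk : (m : ℝ) ≤ (k : ℝ) := by exact_mod_cast Nat.sub_le k ℓ
  have hbmk : (b : ℝ) ^ m ≤ (b : ℝ) ^ k :=
    pow_le_pow_right₀ hb1 (by omega)
  calc |A / D1 - ((b : ℝ) ^ ℓ)⁻¹|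
      ≤ |A / D1 - Ss / D2| + |Ss / D2 - ((b : ℝ) ^ ℓ)⁻¹| := abs_sub_le _ _ _
    _ ≤ 2 * (m : ℝ) / D2 + (b : ℝ) ^ m * ε := add_le_add bound2 bound1
    _ ≤ 2 * (k : ℝ) / D2 + (b : ℝ) ^ k * ε := by
        apply add_le_add
        · gcongr
        · exact mul_le_mul_of_nonneg_right hbmk hε
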